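/- Let m ≥ 1 and n ≥ 1, and let μ be a centered Borel probability measure on ℝ^q with 2mn finite homogeneous moments. Let U_α be a generalized U-statistic of homogeneous degree at most n. There is a constant C = C(μ, q, m, n) > 0 such that for all 1 ≤ N' ≤ N, writing a random string x ∼ μ^{⊗N} as the concatenation x = x₀ ⊕ x_t of its first N' entries x₀ and its last N − N' entries x_t, one has E[ |U_α(x) − U_α(x_t)|^{2m} ] ≤ C · N^{mn} · (N'/N)^m. -/

import Mathlib

open MeasureTheory Finset
open scoped Classical

/-- The generalized U-statistic associated to a list of blocks
`B = [(S₁, α₁), …, (S_r, α_r)]`, where `S_k ⊆ {1,…,q}` and `α_k : {1,…,q} → ℕ`: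
`U_α(x) = Σ_{1 ≤ ℓ₁ < ⋯ < ℓ_r ≤ N} ∏_{k=1}^r ∏_{c ∈ S_k} (x_{ℓ_k}^{(c)})^{α_k(c)}`. -/
noncomputable def Ustat {q : ℕ} (B : List (Finset (Fin q) × (Fin q → ℕ))) {N : ℕ}
    (x : Fin N → Fin q → ℝ) : ℝ :=
  ∑ ℓ ∈ Finset.univ.filter (fun ℓ : Fin B.length → Fin N => StrictMono ℓ),
    ∏ k : Fin B.length, ∏ c ∈ (B.get k).1, x (ℓ k) c ^ (B.get k).2 c

/-- A valid block structure for a generalized U-statistic: `r ≥ 1`, each `S_k` is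
nonempty, and each exponent `α_k(c)`, `c ∈ S_k`, is a positive integer. -/
def ValidBlocks {q : ℕ} (B : List (Finset (Fin q) × (Fin q → ℕ))) : Prop :=
  B ≠ [] ∧ ∀ p ∈ B, p.1.Nonempty ∧ ∀ c ∈ p.1, 0 < p.2 c

/-- The homogeneous degree of a monomial with exponent vector `β`, with respect to the
weight function `w` assigning a homogeneous degree to each coordinate. -/
def homDeg {q : ℕ} (w : Fin q → ℕ) (β : Fin q → ℕ) : ℕ := ∑ c, w c * β c

/-- The homogeneous degree `Σ_{k=1}^r Σ_{c ∈ S_k} w(c)·α_k(c)` of a generalized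
U-statistic with blocks `B`. -/
def ustatHomDeg {q : ℕ} (w : Fin q → ℕ) (B : List (Finset (Fin q) × (Fin q → ℕ))) : ℕ :=
  (B.map fun p => ∑ c ∈ p.1, w c * p.2 c).sum

/-- `μ` has `d` finite homogeneous moments: `∫ ∏_c |x^{(c)}|^{β_c} dμ < ∞` for every
monomial of homogeneous degree at most `d`. -/
def HasFiniteHomMoments {q : ℕ} (w : Fin q → ℕ) (μ : Measure (Fin q → ℝ)) (d : ℕ) : Prop :=
  ∀ β : Fin q → ℕ, homDeg w β ≤ d → Integrable (fun x : Fin q → ℝ => ∏ c, |x c| ^ β c) μ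

/-- `μ` is centered: every degree-1 coordinate has mean zero. -/
def IsCenteredMeasure {q : ℕ} (w : Fin q → ℕ) (μ : Measure (Fin q → ℝ)) : Prop :=
  ∀ c, w c = 1 → ∫ x, x c ∂μ = 0

namespace UstatAux

lemma list_sum_map {α : Type*} (l : List α) (f : α → ℕ) :
    (l.map f).sum = ∑ k : Fin l.length, f (l.get k) := by
  induction l with
  | nil => simp
  | cons a t ih =>
    rw [List.map_cons, List.sum_cons, ih,
      show (∑ k : Fin (a :: t).length, f ((a :: t).get k))
          = ∑ k : Fin (t.length + 1), f ((a :: t).get k) from rfl,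
      Fin.sum_univ_succ]
    simp

variable {q : ℕ}

/-- The exponent vector of a block. -/
def expOf (p : Finset (Fin q) × (Fin q → ℕ)) : Fin q → ℕ := fun c => if c ∈ p.1 then p.2 c else 0

/-- A monomial. -/
noncomputable def mono (β : Fin q → ℕ) (y : Fin q → ℝ) : ℝ := ∏ c, y c ^ β c

lemma blockG_eq_mono (p : Finset (Fin q) × (Fin q → ℕ)) (y : Fin q → ℝ) :
    (∏ c ∈ p.1, y c ^ p.2 c) = mono (expOf p) y := by
  unfold mono
  calc ∏ c ∈ p.1, y c ^ p.2 c = ∏ c ∈ p.1, y c ^ expOf p c :=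
        Finset.prod_congr rfl fun c hc => by simp [expOf, hc]
    _ = ∏ c, y c ^ expOf p c :=
        Finset.prod_subset (Finset.subset_univ _) (fun c _ hc => by simp [expOf, hc])

lemma mono_sum {ι : Type*} (s : Finset ι) (h : ι → Fin q → ℕ) (y : Fin q → ℝ) :
    mono (∑ p ∈ s, h p) y = ∏ p ∈ s, mono (h p) y := by
  unfold mono
  rw [Finset.prod_comm]
  refine Finset.prod_congr rfl fun c _ => ?_
  rw [Finset.prod_pow_eq_pow_sum, Finset.sum_apply]

lemma homDeg_sum {ι : Type*} (w : Fin q → ℕ) (s : Finset ι) (h : ι → Fin q → ℕ) :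
    homDeg w (∑ p ∈ s, h p) = ∑ p ∈ s, homDeg w (h p) := by
  unfold homDeg
  rw [Finset.sum_comm]
  refine Finset.sum_congr rfl fun c _ => ?_
  rw [Finset.sum_apply, Finset.mul_sum]

lemma mono_zero (y : Fin q → ℝ) : mono 0 y = 1 := by simp [mono]

lemma homDeg_zero (w : Fin q → ℕ) : homDeg w 0 = 0 := by simp [homDeg]

lemma abs_mono (β : Fin q → ℕ) (y : Fin q → ℝ) : |mono β y| = ∏ c, |y c| ^ β c := by
  unfold mono
  rw [Finset.abs_prod]
  exact Finset.prod_congr rfl fun c _ => abs_pow _ _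

lemma homDeg_expOf (w : Fin q → ℕ) (p : Finset (Fin q) × (Fin q → ℕ)) :
    homDeg w (expOf p) = ∑ c ∈ p.1, w c * p.2 c := by
  unfold homDeg
  calc ∑ c, w c * expOf p c = ∑ c ∈ p.1, w c * expOf p c :=
        (Finset.sum_subset (Finset.subset_univ _) (fun c _ hc => by simp [expOf, hc])).symm
    _ = ∑ c ∈ p.1, w c * p.2 c := Finset.sum_congr rfl fun c hc => by simp [expOf, hc]

lemma continuous_mono (β : Fin q → ℕ) : Continuous (mono β) :=
  continuous_finset_prod _ fun c _ => (continuous_apply c).pow _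

lemma integrable_mono {w : Fin q → ℕ} {μ : Measure (Fin q → ℝ)} {d : ℕ}
    (hmom : ∀ β : Fin q → ℕ, homDeg w β ≤ d →
      Integrable (fun x : Fin q → ℝ => ∏ c, |x c| ^ β c) μ)
    {β : Fin q → ℕ} (hβ : homDeg w β ≤ d) : Integrable (mono β) μ := by
  refine (hmom β hβ).mono' (continuous_mono β).aestronglyMeasurable ?_
  filter_upwards with y
  rw [Real.norm_eq_abs, abs_mono]

lemma mom_deg_one {w : Fin q → ℕ} (hw : ∀ c, 1 ≤ w c) {μ : Measure (Fin q → ℝ)}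
    (hcent : IsCenteredMeasure w μ) {β : Fin q → ℕ} (hβ : homDeg w β = 1) :
    ∫ y, mono β y ∂μ = 0 := by
  have hex : ∃ c0, w c0 * β c0 ≠ 0 := by
    by_contra h
    push_neg at h
    rw [homDeg, Finset.sum_eq_zero (fun c _ => h c)] at hβ
    exact one_ne_zero hβ.symm
  obtain ⟨c0, hc0⟩ := hex
  have hle : w c0 * β c0 ≤ 1 := by
    rw [← hβ]
    exact Finset.single_le_sum (f := fun c => w c * β c) (fun _ _ => Nat.zero_le _) (mem_univ c0)
  have h1 : w c0 * β c0 = 1 := le_antisymm hle (Nat.one_le_iff_ne_zero.2 hc0)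
  obtain ⟨hw0, hb0⟩ := mul_eq_one.mp h1
  have hrest : ∀ c, c ≠ c0 → β c = 0 := by
    intro c hc
    have herase : ∑ c' ∈ univ.erase c0, w c' * β c' = 0 := by
      have h2 : w c0 * β c0 + ∑ c' ∈ univ.erase c0, w c' * β c' = ∑ c', w c' * β c' :=
        by exact Finset.add_sum_erase univ (fun c => w c * β c) (mem_univ c0)
      rw [homDeg] at hβ
      omega
    have hc' : w c * β c = 0 :=
      Finset.sum_eq_zero_iff.mp herase c (Finset.mem_erase.2 ⟨hc, mem_univ _⟩)
    rcases Nat.mul_eq_zero.mp hc' with h | h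
    · exact absurd h (by have := hw c; omega)
    · exact h
  have hfun : ∀ y : Fin q → ℝ, mono β y = y c0 := by
    intro y
    unfold mono
    rw [Finset.prod_eq_single c0 (fun c _ hc => by rw [hrest c hc, pow_zero])
      (fun h => absurd (mem_univ c0) h), hb0, pow_one]
  calc ∫ y, mono β y ∂μ = ∫ y, y c0 ∂μ := by simp_rw [hfun]
    _ = 0 := hcent c0 hw0

lemma integrable_pi_prod {ι : Type*} [Fintype ι] {E : Type*} [MeasurableSpace E]
    (μ : Measure E) [SigmaFinite μ] {f : ι → E → ℝ} (hf : ∀ i, Integrable (f i) μ) :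
    Integrable (fun x : ι → E => ∏ i, f i (x i)) (Measure.pi fun _ => μ) := by
  letI : MeasureSpace E := ⟨μ⟩
  haveI : SigmaFinite (volume : Measure E) := ‹_›
  exact MeasureTheory.Integrable.fintype_prod (𝕜 := ℝ) hf

lemma integral_pi_prod {ι : Type*} [Fintype ι] {E : Type*} [MeasurableSpace E]
    (μ : Measure E) [SigmaFinite μ] (f : ι → E → ℝ) :
    ∫ x : ι → E, ∏ i, f i (x i) ∂(Measure.pi fun _ => μ) = ∏ i, ∫ y, f i y ∂μ := by
  letI : MeasureSpace E := ⟨μ⟩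
  haveI : SigmaFinite (volume : Measure E) := ‹_›
  exact MeasureTheory.integral_fintype_prod_eq_prod f

lemma nat_pow_bound {N N' m n a b : ℕ} (h1 : 1 ≤ N') (h2 : N' ≤ N)
    (hab1 : a + b ≤ m * n) (hab2 : b + m ≤ m * n) :
    N' ^ a * N ^ b ≤ N' ^ m * N ^ (m * n - m) := by
  rcases le_or_gt a m with h | h
  · exact Nat.mul_le_mul (Nat.pow_le_pow_right h1 h)
      (Nat.pow_le_pow_right (h1.trans h2) (by omega))
  · have hs : N' ^ a ≤ N' ^ m * N ^ (a - m) := by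
      calc N' ^ a = N' ^ m * N' ^ (a - m) := by rw [← pow_add]; congr 1; omega
        _ ≤ N' ^ m * N ^ (a - m) := Nat.mul_le_mul_left _ (Nat.pow_le_pow_left h2 _)
    calc N' ^ a * N ^ b ≤ N' ^ m * N ^ (a - m) * N ^ b := Nat.mul_le_mul_right _ hs
      _ = N' ^ m * N ^ (a - m + b) := by rw [mul_assoc, ← pow_add]
      _ ≤ N' ^ m * N ^ (m * n - m) :=
          Nat.mul_le_mul_left _ (Nat.pow_le_pow_right (h1.trans h2) (by omega))




lemma slice_card_le {K r N N' : ℕ} (hN' : 0 < N') (hNN : N' ≤ N) (a b : ℕ) (hab : 0 < a + b)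
    (S : Finset (Fin K → Fin r → Fin N))
    (hS : ∀ L ∈ S,
      (((Finset.image (fun p : Fin K × Fin r => L p.1 p.2) univ).filter
          (fun i : Fin N => (i : ℕ) < N')).card = a ∧
       ((Finset.image (fun p : Fin K × Fin r => L p.1 p.2) univ).filter
          (fun i : Fin N => ¬ (i : ℕ) < N')).card = b)) :
    S.card ≤ (a + b) ^ (K * r) * (N' ^ a * N ^ b) := by
  have hN : 0 < N := hN'.trans_le hNN
  haveI hne1 : Nonempty (Fin a ⊕ Fin b) := by
    rcases Nat.lt_or_ge 0 a with ha | ha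
    · exact ⟨Sum.inl ⟨0, ha⟩⟩
    · exact ⟨Sum.inr ⟨0, by omega⟩⟩
  haveI : Nonempty (Fin N') := ⟨⟨0, hN'⟩⟩
  haveI : Nonempty (Fin N) := ⟨⟨0, hN⟩⟩
  haveI : Nonempty ((Fin K × Fin r → Fin a ⊕ Fin b) × (Fin a → Fin N') × (Fin b → Fin N)) :=
    inferInstance
  set enc : (Fin K → Fin r → Fin N) →
      (Fin K × Fin r → Fin a ⊕ Fin b) × (Fin a → Fin N') × (Fin b → Fin N) := fun L =>
    if h : (((Finset.image (fun p : Fin K × Fin r => L p.1 p.2) univ).filter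
          (fun i : Fin N => (i : ℕ) < N')).card = a ∧
        ((Finset.image (fun p : Fin K × Fin r => L p.1 p.2) univ).filter
          (fun i : Fin N => ¬ (i : ℕ) < N')).card = b) then
      (fun p => if hp : (L p.1 p.2 : ℕ) < N'
          then Sum.inl ((Finset.orderIsoOfFin _ h.1).symm
            ⟨L p.1 p.2, Finset.mem_filter.2 ⟨Finset.mem_image.2 ⟨p, Finset.mem_univ _, rfl⟩, hp⟩⟩)
          else Sum.inr ((Finset.orderIsoOfFin _ h.2).symm
            ⟨L p.1 p.2, Finset.mem_filter.2 ⟨Finset.mem_image.2 ⟨p, Finset.mem_univ _, rfl⟩, hp⟩⟩),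
        fun i => ⟨((Finset.orderIsoOfFin _ h.1 i).1 : ℕ),
          (Finset.mem_filter.1 (Finset.orderIsoOfFin _ h.1 i).2).2⟩,
        fun i => (Finset.orderIsoOfFin _ h.2 i).1)
    else Classical.arbitrary _
    with henc
  have hrec : ∀ L ∈ S, ∀ p : Fin K × Fin r,
      Sum.elim (fun i => (⟨((enc L).2.1 i : ℕ), lt_of_lt_of_le ((enc L).2.1 i).2 hNN⟩ : Fin N))
        ((enc L).2.2) ((enc L).1 p) = L p.1 p.2 := by
    intro L hL p
    rw [henc]
    simp only [dif_pos (hS L hL)]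
    by_cases hp : (L p.1 p.2 : ℕ) < N'
    · rw [dif_pos hp]
      simp only [Sum.elim_inl]
      apply Fin.ext
      simp
    · rw [dif_neg hp]
      simp only [Sum.elim_inr]
      simp
  calc S.card ≤ (Finset.univ : Finset ((Fin K × Fin r → Fin a ⊕ Fin b) ×
        (Fin a → Fin N') × (Fin b → Fin N))).card := by
        refine Finset.card_le_card_of_injOn enc (fun _ _ => mem_univ _) ?_
        intro L1 h1 L2 h2 heq
        funext j k
        have e1 := hrec L1 h1 (j, k)
        have e2 := hrec L2 h2 (j, k)
        rw [heq] at e1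
        exact e1.symm.trans e2
    _ = (a + b) ^ (K * r) * (N' ^ a * N ^ b) := by
        simp [Fintype.card_prod, Fintype.card_fun, Fintype.card_sum]



end UstatAux

set_option maxHeartbeats 2000000 in
/-- Let `m, n ≥ 1` and let `μ` be a centered Borel probability measure on `ℝ^q` with
`2mn` finite homogeneous moments, and let `U_α` be a generalized U-statistic of
homogeneous degree at most `n`.  There is `C = C(μ, q, m, n) > 0` such that for all
`1 ≤ N' ≤ N`, writing `x ∼ μ^{⊗N}` as the concatenation of its first `N'` entries `x₀`
and its last `N − N'` entries `x_t`,
`E[|U_α(x) − U_α(x_t)|^{2m}] ≤ C · N^{mn} · (N'/N)^m`. -/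
theorem ustat_tail_bound {q s : ℕ} (hq : 1 ≤ q) (hs : 1 ≤ s)
    (w : Fin q → ℕ) (hw : ∀ c, 1 ≤ w c ∧ w c ≤ s)
    (m n : ℕ) (hm : 1 ≤ m) (hn : 1 ≤ n)
    (μ : Measure (Fin q → ℝ)) [IsProbabilityMeasure μ]
    (hcent : IsCenteredMeasure w μ)
    (hmom : HasFiniteHomMoments w μ (2 * m * n))
    (B : List (Finset (Fin q) × (Fin q → ℕ))) (hB : ValidBlocks B)
    (hdeg : ustatHomDeg w B ≤ n) :
    ∃ C : ℝ, 0 < C ∧ ∀ N N' : ℕ, 1 ≤ N' → ∀ h2 : N' ≤ N,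
      (∫ x : Fin N → Fin q → ℝ,
          |Ustat B x -
              Ustat B (fun i : Fin (N - N') =>
                x (Fin.cast (by omega) (Fin.natAdd N' i)))| ^ (2 * m)
        ∂(Measure.pi fun _ : Fin N => μ)) ≤
        C * (N : ℝ) ^ (m * n) * ((N' : ℝ) / (N : ℝ)) ^ m := by
  classical
  obtain ⟨hBne, hBblocks⟩ := hB
  set r := B.length with hrdef
  have hr : 0 < r := List.length_pos_iff.mpr hBne
  -- block degrees are at least 1
  have hblock1 : ∀ k : Fin r, 1 ≤ homDeg w (UstatAux.expOf (B.get k)) := by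
    intro k
    rw [UstatAux.homDeg_expOf]
    obtain ⟨hne, hpos⟩ := hBblocks (B.get k) (List.get_mem B k)
    obtain ⟨c, hc⟩ := hne
    have h1 : 1 ≤ w c * (B.get k).2 c :=
      Nat.one_le_iff_ne_zero.2 (Nat.mul_ne_zero (by have := (hw c).1; omega)
        (by have := hpos c hc; omega))
    exact h1.trans (Finset.single_le_sum (f := fun c => w c * (B.get k).2 c)
      (fun _ _ => Nat.zero_le _) hc)
  set d := ustatHomDeg w B with hddef
  have hdsum : ∑ k : Fin r, homDeg w (UstatAux.expOf (B.get k)) = d := by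
    rw [hddef, ustatHomDeg, UstatAux.list_sum_map]
    exact Finset.sum_congr rfl fun k _ => UstatAux.homDeg_expOf w (B.get k)
  have h2md : 2 * m * d ≤ 2 * m * n := Nat.mul_le_mul le_rfl hdeg
  -- the moment constant
  set mom : (Fin q → ℕ) → ℝ := fun β => ∫ y, UstatAux.mono β y ∂μ with hmomdef
  set Bset : Finset (Fin q → ℕ) :=
    Finset.image (fun f : Fin q → Fin (2 * m * n + 1) => fun c => (f c : ℕ)) Finset.univ
    with hBsetdef
  set M : ℝ := 1 + ∑ β ∈ Bset, |mom β| with hMdef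
  have hM1 : 1 ≤ M := by
    have : 0 ≤ ∑ β ∈ Bset, |mom β| := Finset.sum_nonneg fun _ _ => abs_nonneg _
    rw [hMdef]; linarith
  have hMb : ∀ β : Fin q → ℕ, homDeg w β ≤ 2 * m * n → |mom β| ≤ M := by
    intro β hβ
    have hβc : ∀ c, β c < 2 * m * n + 1 := by
      intro c
      have h1 := (hw c).1
      have h2 : w c * β c ≤ homDeg w β :=
        Finset.single_le_sum (f := fun c => w c * β c) (fun _ _ => Nat.zero_le _)
          (Finset.mem_univ c)
      have h3 : β c ≤ w c * β c := Nat.le_mul_of_pos_left _ h1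
      omega
    have hmem : β ∈ Bset := by
      rw [hBsetdef]
      exact Finset.mem_image.2 ⟨fun c => ⟨β c, hβc c⟩, Finset.mem_univ _, rfl⟩
    have h4 := Finset.single_le_sum (f := fun β => |mom β|) (fun _ _ => abs_nonneg _) hmem
    rw [hMdef]; linarith
  -- the constant
  refine ⟨((2 * m * r + 1) ^ 2 * (2 * m * r) ^ (2 * m * r) : ℕ) * M ^ (2 * m * r) + 1, ?_, ?_⟩
  · have h0 : (0:ℝ) ≤ ((2 * m * r + 1) ^ 2 * (2 * m * r) ^ (2 * m * r) : ℕ) * M ^ (2 * m * r) :=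
      mul_nonneg (Nat.cast_nonneg _) (pow_nonneg (by linarith) _)
    linarith
  intro N N' hN'1 hNN'
  have hN : 0 < N := lt_of_lt_of_le hN'1 hNN'
  set P := (Measure.pi fun _ : Fin N => μ) with hPdef
  set G : Fin r → (Fin q → ℝ) → ℝ := fun k y => ∏ c ∈ (B.get k).1, y c ^ (B.get k).2 c
    with hGdef
  set T : Finset (Fin r → Fin N) :=
    Finset.univ.filter (fun ℓ : Fin r → Fin N => StrictMono ℓ ∧ (ℓ ⟨0, hr⟩ : ℕ) < N')
    with hTdef
  have hcast : N' + (N - N') = N := by omega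
  have hU : ∀ (N0 : ℕ) (y : Fin N0 → Fin q → ℝ),
      Ustat B y = ∑ ℓ ∈ Finset.univ.filter (fun ℓ : Fin r → Fin N0 => StrictMono ℓ),
        ∏ k : Fin r, G k (y (ℓ k)) := by
    intro N0 y
    simp only [Ustat, hGdef]
    convert rfl
  -- Step A : the difference is the sum over tuples meeting the head
  have hdiff : ∀ x : Fin N → Fin q → ℝ,
      Ustat B x - Ustat B (fun i : Fin (N - N') => x (Fin.cast hcast (Fin.natAdd N' i)))
        = ∑ ℓ ∈ T, ∏ k : Fin r, G k (x (ℓ k)) := by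
    intro x
    have htail : Ustat B (fun i : Fin (N - N') => x (Fin.cast hcast (Fin.natAdd N' i)))
        = ∑ ℓ ∈ Finset.univ.filter
            (fun ℓ : Fin r → Fin N => StrictMono ℓ ∧ ¬ (ℓ ⟨0, hr⟩ : ℕ) < N'),
            ∏ k : Fin r, G k (x (ℓ k)) := by
      rcases eq_or_lt_of_le hNN' with heq | hlt
      · rw [hU]
        refine Eq.trans (Finset.sum_eq_zero ?_) (Eq.symm (Finset.sum_eq_zero ?_))
        · intro ℓ hℓ
          exact absurd (ℓ ⟨0, hr⟩).2 (by omega)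
        · intro ℓ hℓ
          rw [Finset.mem_filter] at hℓ
          exact absurd (by omega : (ℓ ⟨0, hr⟩ : ℕ) < N') hℓ.2.2
      rw [hU]
      refine Finset.sum_nbij' (i := fun (ℓ' : Fin r → Fin (N - N')) (k : Fin r) =>
          (⟨N' + (ℓ' k : ℕ), by omega⟩ : Fin N))
        (j := fun (ℓ : Fin r → Fin N) (k : Fin r) =>
          (⟨(ℓ k : ℕ) - N', by omega⟩ : Fin (N - N'))) ?_ ?_ ?_ ?_ ?_
      · intro ℓ' hℓ'
        simp only [Finset.mem_filter, Finset.mem_univ, true_and] at hℓ' ⊢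
        constructor
        · intro k1 k2 hk
          have := hℓ' hk
          rw [Fin.lt_def] at this
          rw [Fin.mk_lt_mk]
          omega
        · rw [Fin.val_mk]
          omega
      · intro ℓ hℓ
        simp only [Finset.mem_filter, Finset.mem_univ, true_and] at hℓ ⊢
        obtain ⟨hsm, hge⟩ := hℓ
        have hgek : ∀ k, N' ≤ (ℓ k : ℕ) := by
          intro k
          have h0 : ℓ ⟨0, hr⟩ ≤ ℓ k := hsm.monotone (by simp [Fin.le_def])
          rw [Fin.le_def] at h0
          omega
        intro k1 k2 hk
        have h5 := hsm hk
        rw [Fin.lt_def] at h5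
        rw [Fin.mk_lt_mk]
        have := hgek k1
        omega
      · intro ℓ' hℓ'
        funext k
        apply Fin.ext
        simp
      · intro ℓ hℓ
        simp only [Finset.mem_filter, Finset.mem_univ, true_and] at hℓ
        obtain ⟨hsm, hge⟩ := hℓ
        funext k
        apply Fin.ext
        have hk : ℓ ⟨0, hr⟩ ≤ ℓ k := hsm.monotone (by simp [Fin.le_def])
        rw [Fin.le_def] at hk
        simp only
        omega
      · intro ℓ' hℓ'
        refine Finset.prod_congr rfl fun k _ => ?_
        have hfe : Fin.cast hcast (Fin.natAdd N' (ℓ' k))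
            = (⟨N' + (ℓ' k : ℕ), by omega⟩ : Fin N) := by
          apply Fin.ext; simp
        simp only [hGdef, hfe]
    have hsplit := Finset.sum_filter_add_sum_filter_not
      (Finset.univ.filter (fun ℓ : Fin r → Fin N => StrictMono ℓ))
      (fun ℓ => (ℓ ⟨0, hr⟩ : ℕ) < N') (fun ℓ => ∏ k : Fin r, G k (x (ℓ k)))
    rw [Finset.filter_filter, Finset.filter_filter] at hsplit
    rw [hU N x, htail, ← hsplit, hTdef]
    ring
  -- Step B : expansion of the 2m-th power
  set allT : Finset (Fin (2 * m) → Fin r → Fin N) := Fintype.piFinset (fun _ => T) with hallTdef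
  set beta : (Fin (2 * m) → Fin r → Fin N) → Fin N → Fin q → ℕ := fun L i =>
    ∑ p ∈ Finset.univ.filter (fun p : Fin (2 * m) × Fin r => L p.1 p.2 = i),
      UstatAux.expOf (B.get p.2) with hbetadef
  have hterm : ∀ (L : Fin (2 * m) → Fin r → Fin N) (x : Fin N → Fin q → ℝ),
      (∏ j : Fin (2 * m), ∏ k : Fin r, G k (x (L j k)))
        = ∏ i : Fin N, UstatAux.mono (beta L i) (x i) := by
    intro L x
    calc (∏ j : Fin (2 * m), ∏ k : Fin r, G k (x (L j k)))
        = ∏ p : Fin (2 * m) × Fin r, G p.2 (x (L p.1 p.2)) :=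
          (Fintype.prod_prod_type (f := fun p : Fin (2 * m) × Fin r => G p.2 (x (L p.1 p.2)))).symm
      _ = ∏ i : Fin N, ∏ p ∈ Finset.univ.filter
            (fun p : Fin (2 * m) × Fin r => L p.1 p.2 = i), G p.2 (x (L p.1 p.2)) :=
          (Finset.prod_fiberwise_of_maps_to (fun p _ => Finset.mem_univ _) _).symm
      _ = ∏ i : Fin N, UstatAux.mono (beta L i) (x i) := by
          refine Finset.prod_congr rfl fun i _ => ?_
          simp only [hbetadef]
          rw [UstatAux.mono_sum]
          refine Finset.prod_congr rfl fun p hp => ?_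
          have hpi := (Finset.mem_filter.1 hp).2
          simp only [hGdef, hpi]
          exact UstatAux.blockG_eq_mono _ _
  have hexpand : ∀ x : Fin N → Fin q → ℝ,
      |Ustat B x - Ustat B (fun i : Fin (N - N') => x (Fin.cast hcast (Fin.natAdd N' i)))|
          ^ (2 * m)
        = ∑ L ∈ allT, ∏ i : Fin N, UstatAux.mono (beta L i) (x i) := by
    intro x
    rw [(even_two_mul m).pow_abs, hdiff x]
    calc (∑ ℓ ∈ T, ∏ k : Fin r, G k (x (ℓ k))) ^ (2 * m)
        = ∏ _j : Fin (2 * m), ∑ ℓ ∈ T, ∏ k : Fin r, G k (x (ℓ k)) := by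
          rw [Finset.prod_const, Finset.card_univ, Fintype.card_fin]
      _ = ∑ L ∈ allT, ∏ j : Fin (2 * m), ∏ k : Fin r, G k (x (L j k)) := by
          rw [hallTdef]; exact Finset.prod_univ_sum _ _
      _ = _ := Finset.sum_congr rfl fun L _ => hterm L x
  -- degree bookkeeping
  have hdeg_total : ∀ L : Fin (2 * m) → Fin r → Fin N,
      ∑ i : Fin N, homDeg w (beta L i) = 2 * m * d := by
    intro L
    calc ∑ i : Fin N, homDeg w (beta L i)
        = ∑ i : Fin N, ∑ p ∈ Finset.univ.filter
            (fun p : Fin (2 * m) × Fin r => L p.1 p.2 = i),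
            homDeg w (UstatAux.expOf (B.get p.2)) := by
          refine Finset.sum_congr rfl fun i _ => ?_
          simp only [hbetadef]
          exact UstatAux.homDeg_sum w _ _
      _ = ∑ p : Fin (2 * m) × Fin r, homDeg w (UstatAux.expOf (B.get p.2)) :=
          Finset.sum_fiberwise_of_maps_to (fun p _ => Finset.mem_univ _) _
      _ = ∑ _j : Fin (2 * m), ∑ k : Fin r, homDeg w (UstatAux.expOf (B.get k)) :=
          Fintype.sum_prod_type _
      _ = ∑ _j : Fin (2 * m), d := Finset.sum_congr rfl fun _ _ => hdsum
      _ = 2 * m * d := by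
          rw [Finset.sum_const, Finset.card_univ, Fintype.card_fin, smul_eq_mul]
  have hdeg_le : ∀ (L : Fin (2 * m) → Fin r → Fin N) (i : Fin N),
      homDeg w (beta L i) ≤ 2 * m * n := by
    intro L i
    have h1 := hdeg_total L
    have h2 : homDeg w (beta L i) ≤ ∑ i : Fin N, homDeg w (beta L i) :=
      Finset.single_le_sum (f := fun i => homDeg w (beta L i)) (fun _ _ => Nat.zero_le _)
        (Finset.mem_univ i)
    omega
  have hint : ∀ L : Fin (2 * m) → Fin r → Fin N,
      Integrable (fun x : Fin N → Fin q → ℝ => ∏ i, UstatAux.mono (beta L i) (x i)) P := by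
    intro L
    rw [hPdef]
    exact UstatAux.integrable_pi_prod μ fun i => UstatAux.integrable_mono hmom (hdeg_le L i)
  have hInt : (∫ x : Fin N → Fin q → ℝ,
        |Ustat B x - Ustat B (fun i : Fin (N - N') =>
          x (Fin.cast hcast (Fin.natAdd N' i)))| ^ (2 * m) ∂P)
      = ∑ L ∈ allT, ∏ i : Fin N, mom (beta L i) := by
    calc (∫ x : Fin N → Fin q → ℝ,
          |Ustat B x - Ustat B (fun i : Fin (N - N') =>
            x (Fin.cast hcast (Fin.natAdd N' i)))| ^ (2 * m) ∂P)
        = ∫ x : Fin N → Fin q → ℝ,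
            ∑ L ∈ allT, ∏ i : Fin N, UstatAux.mono (beta L i) (x i) ∂P :=
          integral_congr_ae (Filter.Eventually.of_forall fun x => hexpand x)
      _ = ∑ L ∈ allT, ∫ x : Fin N → Fin q → ℝ,
            ∏ i : Fin N, UstatAux.mono (beta L i) (x i) ∂P :=
          integral_finset_sum _ (fun L _ => hint L)
      _ = ∑ L ∈ allT, ∏ i : Fin N, mom (beta L i) := by
          refine Finset.sum_congr rfl fun L _ => ?_
          rw [hPdef]
          simp only [hmomdef]
          exact UstatAux.integral_pi_prod μ _
  -- kill the centered terms
  set kept : Finset (Fin (2 * m) → Fin r → Fin N) :=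
    allT.filter (fun L => ∀ i : Fin N, homDeg w (beta L i) ≠ 1) with hkeptdef
  have hzero : ∑ L ∈ allT, ∏ i : Fin N, mom (beta L i)
      = ∑ L ∈ kept, ∏ i : Fin N, mom (beta L i) := by
    rw [hkeptdef]
    symm
    refine Finset.sum_filter_of_ne fun L _ hne0 i hi => ?_
    refine absurd (Finset.prod_eq_zero (Finset.mem_univ i) ?_) hne0
    simp only [hmomdef]
    exact UstatAux.mom_deg_one (fun c => (hw c).1) hcent hi
  -- bound on each kept term
  have hbound : ∀ L ∈ kept, |∏ i : Fin N, mom (beta L i)| ≤ M ^ (2 * m * r) := by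
    intro L _
    rw [Finset.abs_prod]
    have himg : ∀ i : Fin N,
        i ∉ Finset.image (fun p : Fin (2 * m) × Fin r => L p.1 p.2) Finset.univ →
        |mom (beta L i)| = 1 := by
      intro i hi
      have hfib : Finset.univ.filter (fun p : Fin (2 * m) × Fin r => L p.1 p.2 = i) = ∅ := by
        rw [Finset.filter_eq_empty_iff]
        intro p _ h
        exact hi (Finset.mem_image.2 ⟨p, Finset.mem_univ _, h⟩)
      have hb0 : beta L i = 0 := by simp only [hbetadef]; rw [hfib, Finset.sum_empty]
      rw [hb0]
      simp only [hmomdef]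
      rw [show (∫ y, UstatAux.mono 0 y ∂μ) = ∫ _y, (1:ℝ) ∂μ from
        integral_congr_ae (Filter.Eventually.of_forall fun y => UstatAux.mono_zero y)]
      simp
    calc ∏ i : Fin N, |mom (beta L i)|
        = ∏ i ∈ Finset.image (fun p : Fin (2 * m) × Fin r => L p.1 p.2) Finset.univ,
            |mom (beta L i)| :=
          (Finset.prod_subset (Finset.subset_univ _) (fun i _ hi => himg i hi)).symm
      _ ≤ ∏ _i ∈ Finset.image (fun p : Fin (2 * m) × Fin r => L p.1 p.2) Finset.univ, M :=
          Finset.prod_le_prod (fun _ _ => abs_nonneg _) (fun i _ => hMb _ (hdeg_le L i))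
      _ = M ^ (Finset.image (fun p : Fin (2 * m) × Fin r => L p.1 p.2) Finset.univ).card :=
          Finset.prod_const M
      _ ≤ M ^ (2 * m * r) := by
          refine pow_le_pow_right₀ hM1 ?_
          refine le_trans Finset.card_image_le ?_
          simp
    -- counting the kept tuples
  set keyF : (Fin (2 * m) → Fin r → Fin N) → ℕ × ℕ := fun L =>
    (((Finset.image (fun p : Fin (2 * m) × Fin r => L p.1 p.2) Finset.univ).filter
        (fun i : Fin N => (i : ℕ) < N')).card,
     ((Finset.image (fun p : Fin (2 * m) × Fin r => L p.1 p.2) Finset.univ).filter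
        (fun i : Fin N => ¬ (i : ℕ) < N')).card) with hkeyF
  have hslice : ∀ ab : ℕ × ℕ, (kept.filter (fun L => keyF L = ab)).card
      ≤ (2 * m * r) ^ (2 * m * r) * (N' ^ m * N ^ (m * n - m)) := by
    intro ab
    rcases Finset.eq_empty_or_nonempty (kept.filter (fun L => keyF L = ab)) with hS | hSne
    · rw [hS, Finset.card_empty]; exact Nat.zero_le _
    obtain ⟨L0, hL0⟩ := hSne
    obtain ⟨a, b⟩ := ab
    have hL0kept : L0 ∈ kept := (Finset.mem_filter.1 hL0).1
    have hL0key : keyF L0 = (a, b) := (Finset.mem_filter.1 hL0).2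
    have hL0a : ((Finset.image (fun p : Fin (2 * m) × Fin r => L0 p.1 p.2)
        Finset.univ).filter (fun i : Fin N => (i : ℕ) < N')).card = a := by
      have := congrArg Prod.fst hL0key
      simpa [hkeyF] using this
    have hL0b : ((Finset.image (fun p : Fin (2 * m) × Fin r => L0 p.1 p.2)
        Finset.univ).filter (fun i : Fin N => ¬ (i : ℕ) < N')).card = b := by
      have := congrArg Prod.snd hL0key
      simpa [hkeyF] using this
    have hL0kept' := hL0kept
    rw [hkeptdef, Finset.mem_filter] at hL0kept'
    have hL0T : ∀ j : Fin (2 * m), StrictMono (L0 j) ∧ ((L0 j) ⟨0, hr⟩ : ℕ) < N' := by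
      intro j
      have h1 := hL0kept'.1
      rw [hallTdef] at h1
      have h2 := Fintype.mem_piFinset.1 h1 j
      rw [hTdef, Finset.mem_filter] at h2
      exact h2.2
    have hL0deg : ∀ i : Fin N, homDeg w (beta L0 i) ≠ 1 := hL0kept'.2
    have hfib_le : ∀ i : Fin N,
        (Finset.univ.filter (fun p : Fin (2 * m) × Fin r => L0 p.1 p.2 = i)).card
          ≤ homDeg w (beta L0 i) := by
      intro i
      have h1 : homDeg w (beta L0 i)
          = ∑ p ∈ Finset.univ.filter (fun p : Fin (2 * m) × Fin r => L0 p.1 p.2 = i),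
              homDeg w (UstatAux.expOf (B.get p.2)) := by
        simp only [hbetadef]
        exact UstatAux.homDeg_sum w _ _
      rw [h1]
      have h2 := Finset.card_nsmul_le_sum
        (Finset.univ.filter (fun p : Fin (2 * m) × Fin r => L0 p.1 p.2 = i))
        (fun p => homDeg w (UstatAux.expOf (B.get p.2))) 1 (fun p _ => hblock1 p.2)
      simpa using h2
    have hused : ∀ i ∈ Finset.image (fun p : Fin (2 * m) × Fin r => L0 p.1 p.2) Finset.univ,
        2 ≤ homDeg w (beta L0 i) := by
      intro i hi
      obtain ⟨p, -, hp⟩ := Finset.mem_image.1 hi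
      have h1 : 1 ≤ (Finset.univ.filter
          (fun p : Fin (2 * m) × Fin r => L0 p.1 p.2 = i)).card :=
        Finset.card_pos.2 ⟨p, Finset.mem_filter.2 ⟨Finset.mem_univ _, hp⟩⟩
      have h2 := hfib_le i
      have h3 := hL0deg i
      omega
    have hs_card : 2 * m ≤ (Finset.univ.filter
        (fun p : Fin (2 * m) × Fin r => (L0 p.1 p.2 : ℕ) < N')).card := by
      have h1 : (Finset.univ : Finset (Fin (2 * m))).card ≤ (Finset.univ.filter
          (fun p : Fin (2 * m) × Fin r => (L0 p.1 p.2 : ℕ) < N')).card := by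
        refine Finset.card_le_card_of_injOn
          (fun j : Fin (2 * m) => ((j, ⟨0, hr⟩) : Fin (2 * m) × Fin r)) ?_ ?_
        · intro j _
          exact Finset.mem_filter.2 ⟨Finset.mem_univ _, (hL0T j).2⟩
        · intro j1 _ j2 _ h
          exact congrArg Prod.fst h
      simpa using h1
    have hmaps2 : ∀ p ∈ Finset.univ.filter
        (fun p : Fin (2 * m) × Fin r => (L0 p.1 p.2 : ℕ) < N'),
        L0 p.1 p.2 ∈ (Finset.image (fun p : Fin (2 * m) × Fin r => L0 p.1 p.2)
          Finset.univ).filter (fun i : Fin N => (i : ℕ) < N') := by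
      intro p hp
      exact Finset.mem_filter.2 ⟨Finset.mem_image.2 ⟨p, Finset.mem_univ _, rfl⟩,
        (Finset.mem_filter.1 hp).2⟩
    have hpart : (Finset.univ.filter
        (fun p : Fin (2 * m) × Fin r => (L0 p.1 p.2 : ℕ) < N')).card
        ≤ ∑ i ∈ (Finset.image (fun p : Fin (2 * m) × Fin r => L0 p.1 p.2)
            Finset.univ).filter (fun i : Fin N => (i : ℕ) < N'),
            (Finset.univ.filter (fun p : Fin (2 * m) × Fin r => L0 p.1 p.2 = i)).card := by
      rw [Finset.card_eq_sum_card_fiberwise hmaps2]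
      refine Finset.sum_le_sum fun i _ => Finset.card_le_card ?_
      intro p hp
      exact Finset.mem_filter.2 ⟨Finset.mem_univ _, (Finset.mem_filter.1 hp).2⟩
    have hsmall2m : 2 * m ≤ ∑ i ∈ (Finset.image
        (fun p : Fin (2 * m) × Fin r => L0 p.1 p.2) Finset.univ).filter
        (fun i : Fin N => (i : ℕ) < N'), homDeg w (beta L0 i) :=
      le_trans hs_card (le_trans hpart (Finset.sum_le_sum fun i _ => hfib_le i))
    have hsmall2a : a * 2 ≤ ∑ i ∈ (Finset.image
        (fun p : Fin (2 * m) × Fin r => L0 p.1 p.2) Finset.univ).filter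
        (fun i : Fin N => (i : ℕ) < N'), homDeg w (beta L0 i) := by
      have h2 := Finset.card_nsmul_le_sum ((Finset.image
        (fun p : Fin (2 * m) × Fin r => L0 p.1 p.2) Finset.univ).filter
        (fun i : Fin N => (i : ℕ) < N'))
        (fun i => homDeg w (beta L0 i)) 2 (fun i hi => hused i (Finset.mem_filter.1 hi).1)
      rw [hL0a] at h2
      simpa [smul_eq_mul] using h2
    have hlarge2b : b * 2 ≤ ∑ i ∈ (Finset.image
        (fun p : Fin (2 * m) × Fin r => L0 p.1 p.2) Finset.univ).filter
        (fun i : Fin N => ¬ (i : ℕ) < N'), homDeg w (beta L0 i) := by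
      have h2 := Finset.card_nsmul_le_sum ((Finset.image
        (fun p : Fin (2 * m) × Fin r => L0 p.1 p.2) Finset.univ).filter
        (fun i : Fin N => ¬ (i : ℕ) < N'))
        (fun i => homDeg w (beta L0 i)) 2 (fun i hi => hused i (Finset.mem_filter.1 hi).1)
      rw [hL0b] at h2
      simpa [smul_eq_mul] using h2
    have htot : (∑ i ∈ (Finset.image (fun p : Fin (2 * m) × Fin r => L0 p.1 p.2)
          Finset.univ).filter (fun i : Fin N => (i : ℕ) < N'), homDeg w (beta L0 i))
        + (∑ i ∈ (Finset.image (fun p : Fin (2 * m) × Fin r => L0 p.1 p.2)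
          Finset.univ).filter (fun i : Fin N => ¬ (i : ℕ) < N'), homDeg w (beta L0 i))
        ≤ 2 * m * d := by
      rw [Finset.sum_filter_add_sum_filter_not, ← hdeg_total L0]
      exact Finset.sum_le_sum_of_subset (Finset.subset_univ _)
    have e1 : 2 * (a + b) ≤ 2 * (m * n) := by
      have h5 : 2 * m * n = 2 * (m * n) := by ring
      calc 2 * (a + b) = a * 2 + b * 2 := by ring
        _ ≤ _ := Nat.add_le_add hsmall2a hlarge2b
        _ ≤ 2 * m * d := htot
        _ ≤ 2 * m * n := h2md
        _ = 2 * (m * n) := h5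
    have e2 : 2 * (b + m) ≤ 2 * (m * n) := by
      calc 2 * (b + m) = 2 * m + b * 2 := by ring
        _ ≤ _ := Nat.add_le_add hsmall2m hlarge2b
        _ ≤ 2 * m * d := htot
        _ ≤ 2 * m * n := h2md
        _ = 2 * (m * n) := by ring
    have hfeas1 : a + b ≤ m * n := Nat.le_of_mul_le_mul_left e1 (by norm_num)
    have hfeas2 : b + m ≤ m * n := Nat.le_of_mul_le_mul_left e2 (by norm_num)
    have haimg : a + b = (Finset.image (fun p : Fin (2 * m) × Fin r => L0 p.1 p.2)
        Finset.univ).card := by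
      rw [← hL0a, ← hL0b]
      exact Finset.card_filter_add_card_filter_not _
    have habKr : a + b ≤ 2 * m * r := by
      rw [haimg]
      refine le_trans Finset.card_image_le ?_
      simp
    have hab0 : 0 < a + b := by
      rw [haimg]
      refine Finset.card_pos.2 ⟨L0 ⟨0, by omega⟩ ⟨0, hr⟩, ?_⟩
      exact Finset.mem_image.2 ⟨(⟨0, by omega⟩, ⟨0, hr⟩), Finset.mem_univ _, rfl⟩
    have hS2 : ∀ L ∈ kept.filter (fun L => keyF L = (a, b)),
        (((Finset.image (fun p : Fin (2 * m) × Fin r => L p.1 p.2) Finset.univ).filter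
            (fun i : Fin N => (i : ℕ) < N')).card = a ∧
         ((Finset.image (fun p : Fin (2 * m) × Fin r => L p.1 p.2) Finset.univ).filter
            (fun i : Fin N => ¬ (i : ℕ) < N')).card = b) := by
      intro L hL
      have h := (Finset.mem_filter.1 hL).2
      rw [hkeyF] at h
      exact ⟨by simpa using congrArg Prod.fst h, by simpa using congrArg Prod.snd h⟩
    calc (kept.filter (fun L => keyF L = (a, b))).card
        ≤ (a + b) ^ (2 * m * r) * (N' ^ a * N ^ b) :=
          UstatAux.slice_card_le hN'1 hNN' a b hab0 _ hS2
      _ ≤ (2 * m * r) ^ (2 * m * r) * (N' ^ m * N ^ (m * n - m)) :=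
          Nat.mul_le_mul (Nat.pow_le_pow_left habKr _)
            (UstatAux.nat_pow_bound hN'1 hNN' hfeas1 hfeas2)
  have hmaps : ∀ L ∈ kept, keyF L ∈
      Finset.range (2 * m * r + 1) ×ˢ Finset.range (2 * m * r + 1) := by
    intro L _
    rw [hkeyF]
    simp only [Finset.mem_product, Finset.mem_range]
    have h2 : (Finset.image (fun p : Fin (2 * m) × Fin r => L p.1 p.2)
        Finset.univ).card ≤ 2 * m * r := le_trans Finset.card_image_le (by simp)
    constructor
    · have h1 := Finset.card_filter_le (Finset.image
        (fun p : Fin (2 * m) × Fin r => L p.1 p.2) Finset.univ)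
        (fun i : Fin N => (i : ℕ) < N')
      omega
    · have h1 := Finset.card_filter_le (Finset.image
        (fun p : Fin (2 * m) × Fin r => L p.1 p.2) Finset.univ)
        (fun i : Fin N => ¬ (i : ℕ) < N')
      omega
  have hcard : kept.card ≤ (2 * m * r + 1) ^ 2
      * ((2 * m * r) ^ (2 * m * r) * (N' ^ m * N ^ (m * n - m))) := by
    rw [Finset.card_eq_sum_card_fiberwise hmaps]
    calc ∑ ab ∈ Finset.range (2 * m * r + 1) ×ˢ Finset.range (2 * m * r + 1),
          (kept.filter (fun L => keyF L = ab)).card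
        ≤ ∑ _ab ∈ Finset.range (2 * m * r + 1) ×ˢ Finset.range (2 * m * r + 1),
            (2 * m * r) ^ (2 * m * r) * (N' ^ m * N ^ (m * n - m)) :=
          Finset.sum_le_sum (fun ab _ => hslice ab)
      _ = (2 * m * r + 1) ^ 2
          * ((2 * m * r) ^ (2 * m * r) * (N' ^ m * N ^ (m * n - m))) := by
          rw [Finset.sum_const, Finset.card_product, Finset.card_range, smul_eq_mul]
          ring
  -- final assembly
  have hfinal : (∫ x : Fin N → Fin q → ℝ,
        |Ustat B x - Ustat B (fun i : Fin (N - N') =>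
          x (Fin.cast hcast (Fin.natAdd N' i)))| ^ (2 * m) ∂P)
      ≤ (kept.card : ℝ) * M ^ (2 * m * r) := by
    rw [hInt, hzero]
    calc ∑ L ∈ kept, ∏ i : Fin N, mom (beta L i)
        ≤ |∑ L ∈ kept, ∏ i : Fin N, mom (beta L i)| := le_abs_self _
      _ ≤ ∑ L ∈ kept, |∏ i : Fin N, mom (beta L i)| := Finset.abs_sum_le_sum_abs _ _
      _ ≤ kept.card • (M ^ (2 * m * r)) := Finset.sum_le_card_nsmul _ _ _ hbound
      _ = (kept.card : ℝ) * M ^ (2 * m * r) := nsmul_eq_mul _ _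
  refine le_trans hfinal ?_
  have hc2 : (kept.card : ℝ) ≤ (((2 * m * r + 1) ^ 2 * (2 * m * r) ^ (2 * m * r) : ℕ) : ℝ)
      * ((N' : ℝ) ^ m * (N : ℝ) ^ (m * n - m)) := by
    calc (kept.card : ℝ) ≤ (((2 * m * r + 1) ^ 2
          * ((2 * m * r) ^ (2 * m * r) * (N' ^ m * N ^ (m * n - m))) : ℕ) : ℝ) :=
          Nat.cast_le.2 hcard
      _ = _ := by push_cast; ring
  have hNne : (N : ℝ) ≠ 0 := Nat.cast_ne_zero.2 hN.ne'
  have hmle : m ≤ m * n := Nat.le_mul_of_pos_right m (by omega)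
  have hRHS : ((((2 * m * r + 1) ^ 2 * (2 * m * r) ^ (2 * m * r) : ℕ) : ℝ)
        * M ^ (2 * m * r) + 1) * (N : ℝ) ^ (m * n) * ((N' : ℝ) / (N : ℝ)) ^ m
      = ((((2 * m * r + 1) ^ 2 * (2 * m * r) ^ (2 * m * r) : ℕ) : ℝ)
        * M ^ (2 * m * r) + 1) * ((N' : ℝ) ^ m * (N : ℝ) ^ (m * n - m)) := by
    rw [div_pow, pow_sub₀ (N : ℝ) hNne hmle]
    field_simp
  rw [hRHS]
  have hX : (0:ℝ) ≤ (N' : ℝ) ^ m * (N : ℝ) ^ (m * n - m) := by positivity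
  have hMp : (0:ℝ) < M ^ (2 * m * r) := pow_pos (by linarith) _
  calc (kept.card : ℝ) * M ^ (2 * m * r)
      ≤ (((2 * m * r + 1) ^ 2 * (2 * m * r) ^ (2 * m * r) : ℕ) : ℝ)
          * ((N' : ℝ) ^ m * (N : ℝ) ^ (m * n - m)) * M ^ (2 * m * r) :=
        mul_le_mul_of_nonneg_right hc2 hMp.le
    _ = (((2 * m * r + 1) ^ 2 * (2 * m * r) ^ (2 * m * r) : ℕ) : ℝ) * M ^ (2 * m * r)
          * ((N' : ℝ) ^ m * (N : ℝ) ^ (m * n - m)) := by ring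
    _ ≤ ((((2 * m * r + 1) ^ 2 * (2 * m * r) ^ (2 * m * r) : ℕ) : ℝ) * M ^ (2 * m * r) + 1)
          * ((N' : ℝ) ^ m * (N : ℝ) ^ (m * n - m)) := by nlinarith
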